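/- Let F_f(φ) = ∫ f φ dμ be a linear functional on field configurations and W(f) = exp(iF_f). Then the n-th functional derivative of W(f) at φ in direction h^{⊗n} equals (i∫ f h dμ)^n · W(f)(φ), and consequently the exponential star product formula (F ⋆ G)(φ) = Σ_{n≥0} (ħⁿ/n!) ⟨F^{(n)}(φ), ((i/2)Δ)^{⊗n} G^{(n)}(φ)⟩ yields W(f) ⋆ W(g) = e^{-(iħ/2)Δ(f,g)} W(f+g). -/

import Mathlib

open Complex MeasureTheory

/-- The linear functional `F_f(φ) = ∫ f φ dμ` on field configurations. -/
noncomputable def Ffun (f φ : ℝ → ℝ) : ℝ := ∫ x : ℝ, f x * φ x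

/-- The Weyl functional `W(f) = exp(i F_f)`. -/
noncomputable def Wfun (f φ : ℝ → ℝ) : ℂ := Complex.exp (Complex.I * (Ffun f φ : ℝ))

/-- The smeared causal propagator `Δ(f,g) = ∫∫ Δ(x,y) f(x) g(y)`. -/
noncomputable def propPair (Dk : ℝ → ℝ → ℝ) (f g : ℝ → ℝ) : ℂ :=
  ∫ x : ℝ, ∫ y : ℝ, ((Dk x y : ℝ) : ℂ) * (f x : ℝ) * (g y : ℝ)

private lemma iter_exp (c d : ℂ) :
    ∀ n : ℕ, iteratedDeriv n (fun lam : ℝ => Complex.exp (c * lam + d))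
      = fun lam : ℝ => c ^ n * Complex.exp (c * lam + d) := by
  intro n
  induction n with
  | zero => simp
  | succ n ih =>
    rw [iteratedDeriv_succ, ih]
    funext lam
    have h1 : HasDerivAt (fun lam : ℝ => (lam : ℂ)) 1 lam := by
      simpa using (hasDerivAt_id lam).ofReal_comp
    have h2 : HasDerivAt (fun lam : ℝ => c * (lam : ℂ) + d) c lam := by
      simpa using (h1.const_mul c).add_const d
    have h3 := (h2.cexp).const_mul (c ^ n)
    rw [h3.deriv]
    ring

/-- The n-th functional (Gateaux) derivative of `W(f)` at `φ` in direction `h^{⊗n}`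
equals `(i ∫ f h dμ)^n W(f)(φ)`, and consequently the exponential star product series
`(F ⋆ G)(φ) = Σ (ħⁿ/n!) ⟨F⁽ⁿ⁾(φ), ((i/2)Δ)^{⊗n} G⁽ⁿ⁾(φ)⟩` sums to
`W(f) ⋆ W(g) = e^{-(iħ/2)Δ(f,g)} W(f+g)`. -/
theorem weyl_functional_derivatives_and_star
    (Dk : ℝ → ℝ → ℝ) (hanti : ∀ x y, Dk x y = - Dk y x) (hbar : ℝ) (f g : ℝ → ℝ) :
    (∀ (φ h : ℝ → ℝ), Integrable (fun x => f x * φ x) →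
      Integrable (fun x => f x * h x) → ∀ n : ℕ,
      iteratedDeriv n (fun lam : ℝ => Wfun f (φ + lam • h)) 0
        = (Complex.I * ((∫ x : ℝ, f x * h x : ℝ) : ℂ)) ^ n * Wfun f φ) ∧
    (∀ φ : ℝ → ℝ, Integrable (fun x => f x * φ x) →
      Integrable (fun x => g x * φ x) →
      HasSum
        (fun n : ℕ => ((hbar : ℂ) ^ n / (n.factorial : ℂ)) *
          ((Complex.I / 2) ^ n * (propPair Dk f g) ^ n *
            ((Complex.I ^ n) * Wfun f φ) * ((Complex.I ^ n) * Wfun g φ)))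
        (Complex.exp (-(Complex.I * hbar / 2) * propPair Dk f g) * Wfun (f + g) φ)) := by
  constructor
  · intro φ h hφ hh n
    set a : ℝ := ∫ x : ℝ, f x * φ x with ha
    set b : ℝ := ∫ x : ℝ, f x * h x with hb
    have hfun : (fun lam : ℝ => Wfun f (φ + lam • h))
        = fun lam : ℝ => Complex.exp ((Complex.I * b) * lam + Complex.I * a) := by
      funext lam
      have hint : (∫ x : ℝ, f x * (φ + lam • h) x) = a + lam * b := by
        have : (fun x : ℝ => f x * (φ + lam • h) x)
            = fun x : ℝ => f x * φ x + lam * (f x * h x) := by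
          funext x; simp [Pi.add_apply, Pi.smul_apply, smul_eq_mul]; ring
        rw [this, integral_add hφ (hh.const_mul lam), MeasureTheory.integral_const_mul]
      unfold Wfun Ffun
      rw [hint]
      push_cast
      ring_nf
    rw [hfun, iter_exp]
    unfold Wfun Ffun
    simp [ha]
  · intro φ hf hg
    set P : ℂ := propPair Dk f g with hP
    have hW : Wfun (f + g) φ = Wfun f φ * Wfun g φ := by
      unfold Wfun Ffun
      have : (∫ x : ℝ, (f + g) x * φ x)
          = (∫ x : ℝ, f x * φ x) + ∫ x : ℝ, g x * φ x := by
        rw [← integral_add hf hg]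
        congr 1; funext x; simp [Pi.add_apply]; ring
      rw [this, ← Complex.exp_add]
      push_cast
      ring_nf
    have hz : -(Complex.I * hbar / 2) * P
        = Complex.I * Complex.I * (Complex.I / 2) * ((hbar : ℂ) * P) := by
      rw [Complex.I_mul_I]; ring
    have hsum := (NormedSpace.expSeries_div_hasSum_exp
        (-(Complex.I * hbar / 2) * P)).mul_right (Wfun f φ * Wfun g φ)
    rw [← Complex.exp_eq_exp_ℂ] at hsum
    rw [hW]
    convert hsum using 1
    · rfl
    funext n
    rw [hz, mul_pow, mul_pow, mul_pow, mul_pow]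
    field_simp
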